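/- arXiv:1209.2883 — 5 statements merged into one kernel-verified Lean document; each statement's English description precedes it below -/
import Mathlib

section
/- Let Y be a finite set and W a convex subset of the set of probability mass functions on Y. Suppose f* is an element of W that maximizes the entropy H over W, i.e., H(f) ≤ H(f*) for all f in W. Then for every f in W, the support of f is contained in the support of f*: S_f ⊆ S_{f*}. -/
open Real Finset

lemma entropy_as_negMulLog {Y : Type*} [Fintype Y] (h : Y → ℝ) :
    -∑ y, h y * Real.log (h y) = ∑ y, Real.negMulLog (h y) := by
  rw [← Finset.sum_neg_distrib]
  simp [Real.negMulLog, neg_mul]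

/-- Let `Y` be a finite set and `W` a convex subset of the set of pmfs on `Y`.
If `fstar ∈ W` maximizes the entropy `H(f) = -∑ y, f y * log (f y)` over `W`, then for every
`f ∈ W` the support of `f` is contained in the support of `fstar`. -/
theorem support_subset_of_entropy_max {Y : Type*} [Fintype Y]
    (W : Set (Y → ℝ))
    (hW_pmf : ∀ f ∈ W, (∀ y, 0 ≤ f y) ∧ ∑ y, f y = 1)
    (hW_conv : ∀ f ∈ W, ∀ g ∈ W, ∀ l : ℝ, 0 ≤ l → l ≤ 1 →
      (fun y => l * f y + (1 - l) * g y) ∈ W)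
    (fstar : Y → ℝ) (hfstar : fstar ∈ W)
    (hmax : ∀ f ∈ W,
      -∑ y, f y * Real.log (f y) ≤ -∑ y, fstar y * Real.log (fstar y))
    (f : Y → ℝ) (hf : f ∈ W) :
    {y | 0 < f y} ⊆ {y | 0 < fstar y} := by
  classical
  intro y0 hy0
  by_contra hy0'
  simp only [Set.mem_setOf_eq, not_lt] at hy0 hy0'
  have hfs0 : fstar y0 = 0 := le_antisymm hy0' ((hW_pmf fstar hfstar).1 y0)
  set A : ℝ := ∑ y, Real.negMulLog (f y) with hA
  set B : ℝ := ∑ y, Real.negMulLog (fstar y) with hB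
  have hfy0 : 0 < f y0 := hy0
  -- choose λ
  set l : ℝ := min (1/2) (Real.exp ((A - B) / f y0 - 1)) with hl
  have hl0 : 0 < l := lt_min (by norm_num) (Real.exp_pos _)
  have hl1 : l ≤ 1 := le_trans (min_le_left _ _) (by norm_num)
  have hlogl : Real.log l ≤ (A - B) / f y0 - 1 := by
    calc Real.log l ≤ Real.log (Real.exp ((A - B) / f y0 - 1)) :=
          Real.log_le_log hl0 (min_le_right _ _)
      _ = (A - B) / f y0 - 1 := Real.log_exp _
  set g : Y → ℝ := fun y => l * f y + (1 - l) * fstar y with hg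
  have hgW : g ∈ W := hW_conv f hf fstar hfstar l hl0.le hl1
  -- pointwise concavity on erase y0
  have hconc : ∀ y, l * Real.negMulLog (f y) + (1 - l) * Real.negMulLog (fstar y)
      ≤ Real.negMulLog (g y) := by
    intro y
    have := Real.concaveOn_negMulLog.2
      (Set.mem_Ici.2 ((hW_pmf f hf).1 y))
      (Set.mem_Ici.2 ((hW_pmf fstar hfstar).1 y)) hl0.le (sub_nonneg.2 hl1) (by ring)
    simpa [smul_eq_mul] using this
  -- value at y0
  have hgy0 : Real.negMulLog (g y0)
      = l * Real.negMulLog (f y0) + (1 - l) * Real.negMulLog (fstar y0)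
        - l * f y0 * Real.log l := by
    have : g y0 = l * f y0 := by simp [hg, hfs0]
    rw [this]
    simp only [Real.negMulLog, hfs0, Real.log_mul (ne_of_gt hl0) (ne_of_gt hfy0)]
    ring
  -- sum bound
  have key : B + l * (A - B - f y0 * Real.log l) ≤ ∑ y, Real.negMulLog (g y) := by
    have hsplit : ∀ h : Y → ℝ, ∑ y, Real.negMulLog (h y)
        = Real.negMulLog (h y0) + ∑ y ∈ Finset.univ.erase y0, Real.negMulLog (h y) :=
      fun h => (Finset.add_sum_erase _ _ (Finset.mem_univ y0)).symm
    have hrest : ∑ y ∈ Finset.univ.erase y0,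
        (l * Real.negMulLog (f y) + (1 - l) * Real.negMulLog (fstar y))
        ≤ ∑ y ∈ Finset.univ.erase y0, Real.negMulLog (g y) :=
      Finset.sum_le_sum fun y _ => hconc y
    rw [hsplit g, hgy0]
    have hArw : A = Real.negMulLog (f y0) + ∑ y ∈ Finset.univ.erase y0, Real.negMulLog (f y) :=
      hsplit f
    have hBrw : B = Real.negMulLog (fstar y0)
        + ∑ y ∈ Finset.univ.erase y0, Real.negMulLog (fstar y) := hsplit fstar
    rw [Finset.sum_add_distrib, ← Finset.mul_sum, ← Finset.mul_sum] at hrest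
    nlinarith [hrest]
  have hpos : 0 < l * (A - B - f y0 * Real.log l) := by
    apply mul_pos hl0
    have : f y0 * Real.log l ≤ A - B - f y0 := by
      have := mul_le_mul_of_nonneg_left hlogl hfy0.le
      rw [mul_sub, mul_div_cancel₀ _ (ne_of_gt hfy0)] at this
      linarith
    linarith
  have hle := hmax g hgW
  rw [entropy_as_negMulLog, entropy_as_negMulLog] at hle
  linarith
end

section
/- Let X and U be finite nonempty sets, Q a transition kernel on X controlled by U, F ⊆ X, and let f* be a joint pmf maximizing the entropy over the feasible set of the convex program (joint pmfs satisfying the stationarity constraint Σ_{u⁺} f(x⁺,u⁺) = Σ_{x,u} Q(x⁺,x,u) f(x,u) for all x⁺, and Σ_u f(x,u) = 0 for all x ∈ F). Let K be any memoryless policy and let f^K be any joint pmf satisfying the closed-loop invariance equation f^K(x⁺,u⁺) = K(u⁺,x⁺) · Σ_{x,u} Q(x⁺,x,u) f^K(x,u) for all x⁺, u⁺, and Σ_u f^K(x,u) = 0 for all x ∈ F. Then the support of the state marginal of f^K is contained in the support of the state marginal of f*: { x : Σ_u f^K(x,u) > 0 } ⊆ { x : Σ_u f*(x,u) > 0 }.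 -/
/-- Let `fstar` be a joint pmf maximizing the entropy over the feasible set
(stationarity plus `F`-safety). Let `K` be any memoryless policy and `fK` any joint pmf
satisfying the closed-loop invariance equation under `K` and the `F`-safety constraint.
Then the support of the state marginal of `fK` is contained in that of `fstar`. -/
theorem marginal_support_subset_of_entropy_max {X U : Type*} [Fintype X] [Fintype U]
    [Nonempty X] [Nonempty U]
    (Q : X → X → U → ℝ)
    (hQ0 : ∀ x' x u, 0 ≤ Q x' x u)
    (hQ1 : ∀ x u, ∑ x', Q x' x u = 1)
    (F : Set X)
    (fstar : X → U → ℝ)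
    (hfstar0 : ∀ x u, 0 ≤ fstar x u)
    (hfstar1 : ∑ x, ∑ u, fstar x u = 1)
    (hfstar_stat : ∀ x' : X, ∑ u', fstar x' u' = ∑ x, ∑ u, Q x' x u * fstar x u)
    (hfstar_safe : ∀ x ∈ F, ∑ u, fstar x u = 0)
    (hmax : ∀ f : X → U → ℝ,
      (∀ x u, 0 ≤ f x u) → (∑ x, ∑ u, f x u = 1) →
      (∀ x' : X, ∑ u', f x' u' = ∑ x, ∑ u, Q x' x u * f x u) →
      (∀ x ∈ F, ∑ u, f x u = 0) →
      -∑ x, ∑ u, f x u * Real.log (f x u) ≤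
        -∑ x, ∑ u, fstar x u * Real.log (fstar x u))
    (K : U → X → ℝ)
    (hK0 : ∀ u x, 0 ≤ K u x)
    (hK1 : ∀ x, ∑ u, K u x = 1)
    (fK : X → U → ℝ)
    (hfK0 : ∀ x u, 0 ≤ fK x u)
    (hfK1 : ∑ x, ∑ u, fK x u = 1)
    (hfK_inv : ∀ x' u', fK x' u' = K u' x' * ∑ x, ∑ u, Q x' x u * fK x u)
    (hfK_safe : ∀ x ∈ F, ∑ u, fK x u = 0) :
    {x : X | 0 < ∑ u, fK x u} ⊆ {x : X | 0 < ∑ u, fstar x u} := by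
  classical
  intro x0 hx0
  simp only [Set.mem_setOf_eq] at hx0 ⊢
  by_contra hcon
  -- fstar's marginal at x0 is zero, so fstar x0 u = 0 for all u
  have hmarg0 : ∑ u, fstar x0 u = 0 := by
    have h1 : 0 ≤ ∑ u, fstar x0 u := Finset.sum_nonneg fun u _ => hfstar0 x0 u
    linarith [lt_or_eq_of_le h1]
  have hstar0 : ∀ u, fstar x0 u = 0 := by
    intro u
    have := (Finset.sum_eq_zero_iff_of_nonneg (fun u _ => hfstar0 x0 u)).1 hmarg0
    exact this u (Finset.mem_univ u)
  -- pick u0 with fK x0 u0 > 0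
  obtain ⟨u0, hu0⟩ : ∃ u0, 0 < fK x0 u0 := by
    by_contra h
    push_neg at h
    have : ∑ u, fK x0 u = 0 := le_antisymm (Finset.sum_nonpos fun u _ => h u)
      (Finset.sum_nonneg fun u _ => hfK0 x0 u)
    linarith
  set c := fK x0 u0 with hc_def
  have hc : 0 < c := hu0
  -- entries of pmfs are ≤ 1
  have hle1 : ∀ (f : X → U → ℝ), (∀ x u, 0 ≤ f x u) → (∑ x, ∑ u, f x u = 1) →
      ∀ x u, f x u ≤ 1 := by
    intro f h0 h1 x u
    calc f x u ≤ ∑ u', f x u' := Finset.single_le_sum (fun u' _ => h0 x u') (Finset.mem_univ u)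
    _ ≤ ∑ x', ∑ u', f x' u' :=
        Finset.single_le_sum (fun x' _ => Finset.sum_nonneg fun u' _ => h0 x' u')
          (Finset.mem_univ x)
    _ = 1 := h1
  -- fK is stationary
  have hfK_stat : ∀ x' : X, ∑ u', fK x' u' = ∑ x, ∑ u, Q x' x u * fK x u := by
    intro x'
    calc ∑ u', fK x' u' = ∑ u', K u' x' * ∑ x, ∑ u, Q x' x u * fK x u := by
          exact Finset.sum_congr rfl fun u' _ => hfK_inv x' u'
    _ = (∑ u', K u' x') * ∑ x, ∑ u, Q x' x u * fK x u := by rw [Finset.sum_mul]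
    _ = ∑ x, ∑ u, Q x' x u * fK x u := by rw [hK1 x', one_mul]
  -- entropies
  set E : ℝ := ∑ x, ∑ u, Real.negMulLog (fstar x u) with hE_def
  set Eb : ℝ := ∑ x, ∑ u, Real.negMulLog (fK x u) with hEb_def
  have hEb0 : 0 ≤ Eb :=
    Finset.sum_nonneg fun x _ => Finset.sum_nonneg fun u _ =>
      Real.negMulLog_nonneg (hfK0 x u) (hle1 fK hfK0 hfK1 x u)
  -- choose t
  set t : ℝ := min (Real.exp (-(E + 1) / c)) (1 / 2) with ht_def
  have ht0 : 0 < t := lt_min (Real.exp_pos _) (by norm_num)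
  have ht_half : t ≤ 1 / 2 := min_le_right _ _
  have ht1 : t ≤ 1 := by linarith
  have hlogt : c * Real.log t ≤ -(E + 1) := by
    have h1 : Real.log t ≤ -(E + 1) / c := by
      calc Real.log t ≤ Real.log (Real.exp (-(E + 1) / c)) :=
            Real.log_le_log ht0 (min_le_left _ _)
      _ = -(E + 1) / c := Real.log_exp _
    calc c * Real.log t ≤ c * (-(E + 1) / c) := by
          exact mul_le_mul_of_nonneg_left h1 hc.le
    _ = -(E + 1) := by field_simp
  -- the mixture
  set g : X → U → ℝ := fun x u => (1 - t) * fstar x u + t * fK x u with hg_def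
  have hg0 : ∀ x u, 0 ≤ g x u := fun x u =>
    add_nonneg (mul_nonneg (by linarith) (hfstar0 x u)) (mul_nonneg ht0.le (hfK0 x u))
  have hg1 : ∑ x, ∑ u, g x u = 1 := by
    simp only [hg_def, Finset.sum_add_distrib, ← Finset.mul_sum]
    rw [hfstar1, hfK1]; ring
  have hg_stat : ∀ x' : X, ∑ u', g x' u' = ∑ x, ∑ u, Q x' x u * g x u := by
    intro x'
    have hterm : ∀ x u, Q x' x u * ((1 - t) * fstar x u + t * fK x u) =
        (1 - t) * (Q x' x u * fstar x u) + t * (Q x' x u * fK x u) := by intros; ring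
    simp only [hg_def]
    simp_rw [hterm, Finset.sum_add_distrib, ← Finset.mul_sum]
    rw [← hfstar_stat, ← hfK_stat]
  have hg_safe : ∀ x ∈ F, ∑ u, g x u = 0 := by
    intro x hx
    simp only [hg_def, Finset.sum_add_distrib, ← Finset.mul_sum]
    rw [hfstar_safe x hx, hfK_safe x hx]; ring
  -- key termwise inequality
  have key : ∀ x u,
      (1 - t) * Real.negMulLog (fstar x u) + t * Real.negMulLog (fK x u) +
        (if x = x0 then (if u = u0 then -(t * c * Real.log t) else 0) else 0)
        ≤ Real.negMulLog (g x u) := by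
    intro x u
    by_cases hxu : x = x0 ∧ u = u0
    · obtain ⟨hx, hu⟩ := hxu
      subst hx; subst hu
      simp only [if_pos rfl]
      have hg_val : g x u = t * c := by
        simp only [hg_def, hstar0 u, hc_def]; ring
      have heq : Real.negMulLog (g x u) =
          (1 - t) * Real.negMulLog (fstar x u) + t * Real.negMulLog (fK x u) +
            -(t * c * Real.log t) := by
        rw [hg_val, Real.negMulLog_mul, hstar0 u, Real.negMulLog_zero]
        simp only [Real.negMulLog, hc_def]
        ring
      exact le_of_eq heq.symm
    · have hif : (if x = x0 then (if u = u0 then -(t * c * Real.log t) else 0) else 0) = 0 := by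
        by_cases hx : x = x0
        · subst hx
          have hu : u ≠ u0 := fun h => hxu ⟨rfl, h⟩
          simp [hu]
        · simp [hx]
      rw [hif, add_zero]
      have := Real.concaveOn_negMulLog.2 (Set.mem_Ici.2 (hfstar0 x u))
        (Set.mem_Ici.2 (hfK0 x u)) (by linarith : (0:ℝ) ≤ 1 - t) ht0.le (by ring)
      simpa [smul_eq_mul, hg_def] using this
  -- sum the key inequality
  have hsum : (1 - t) * E + t * Eb + -(t * c * Real.log t) ≤
      ∑ x, ∑ u, Real.negMulLog (g x u) := by
    have h1 : ∑ x, ∑ u,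
        ((1 - t) * Real.negMulLog (fstar x u) + t * Real.negMulLog (fK x u) +
          (if x = x0 then (if u = u0 then -(t * c * Real.log t) else 0) else 0))
        ≤ ∑ x, ∑ u, Real.negMulLog (g x u) :=
      Finset.sum_le_sum fun x _ => Finset.sum_le_sum fun u _ => key x u
    have h2 : ∑ x, ∑ u,
        ((1 - t) * Real.negMulLog (fstar x u) + t * Real.negMulLog (fK x u) +
          (if x = x0 then (if u = u0 then -(t * c * Real.log t) else 0) else 0))
        = (1 - t) * E + t * Eb + -(t * c * Real.log t) := by
      simp only [Finset.sum_add_distrib, ← Finset.mul_sum, ← hE_def, ← hEb_def]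
      congr 1
      simp [Finset.sum_ite_eq']
    linarith [h2 ▸ h1]
  -- apply maximality
  have hmax' := hmax g hg0 hg1 hg_stat hg_safe
  have hEg : -∑ x, ∑ u, g x u * Real.log (g x u) = ∑ x, ∑ u, Real.negMulLog (g x u) := by
    simp [Real.negMulLog, neg_mul, Finset.sum_neg_distrib]
  have hEstar : -∑ x, ∑ u, fstar x u * Real.log (fstar x u) = E := by
    simp [hE_def, Real.negMulLog, neg_mul, Finset.sum_neg_distrib]
  rw [hEg, hEstar] at hmax'
  -- derive the contradiction
  nlinarith [mul_le_mul_of_nonneg_left hlogt ht0.le, mul_nonneg ht0.le hEb0, mul_pos ht0 hc]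
end

section
/- Let X and U be finite nonempty sets and W a convex subset of the set of joint pmfs on X × U. Suppose f̄ ∈ W maximizes the marginal entropy H(f_X) = -Σ_{x∈X} f_X(x) ln f_X(x) over W, where f_X(x) = Σ_{u∈U} f(x,u). Then for every f ∈ W, the support of the state marginal of f is contained in the support of the state marginal of f̄: { x : f_X(x) > 0 } ⊆ { x : f̄_X(x) > 0 }. -/
/-- Let `W` be a convex subset of the joint pmfs on `X × U`. If `fbar ∈ W`
maximizes the marginal entropy `H(f_X) = -∑ x, f_X x * log (f_X x)` over `W`, where
`f_X x = ∑ u, f x u`, then for every `f ∈ W` the support of the state marginal of `f`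
is contained in the support of the state marginal of `fbar`. -/
theorem marginal_support_subset_of_marginal_entropy_max {X U : Type*}
    [Fintype X] [Fintype U] [Nonempty X] [Nonempty U]
    (W : Set (X → U → ℝ))
    (hW_pmf : ∀ f ∈ W, (∀ x u, 0 ≤ f x u) ∧ ∑ x, ∑ u, f x u = 1)
    (hW_conv : ∀ f ∈ W, ∀ g ∈ W, ∀ l : ℝ, 0 ≤ l → l ≤ 1 →
      (fun x u => l * f x u + (1 - l) * g x u) ∈ W)
    (fbar : X → U → ℝ) (hfbar : fbar ∈ W)
    (hmax : ∀ f ∈ W,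
      -∑ x, (∑ u, f x u) * Real.log (∑ u, f x u) ≤
        -∑ x, (∑ u, fbar x u) * Real.log (∑ u, fbar x u))
    (f : X → U → ℝ) (hf : f ∈ W) :
    {x : X | 0 < ∑ u, f x u} ⊆ {x : X | 0 < ∑ u, fbar x u} := by
  classical
  intro x0 hx0
  simp only [Set.mem_setOf_eq] at hx0 ⊢
  by_contra hq0
  set p : X → ℝ := fun x => ∑ u, f x u with hp
  set q : X → ℝ := fun x => ∑ u, fbar x u with hq
  have hpnn : ∀ x, 0 ≤ p x := fun x => Finset.sum_nonneg fun u _ => (hW_pmf f hf).1 x u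
  have hqnn : ∀ x, 0 ≤ q x := fun x => Finset.sum_nonneg fun u _ => (hW_pmf fbar hfbar).1 x u
  have hq0' : q x0 = 0 := le_antisymm (not_lt.mp hq0) (hqnn x0)
  have hp0 : 0 < p x0 := hx0
  set S := ∑ x ∈ Finset.univ.erase x0, (Real.negMulLog (p x) - Real.negMulLog (q x)) with hS
  set t := (1 + |S| + p x0 * |Real.log (p x0)|) / p x0 with ht
  have htpos : 0 < t := div_pos (by positivity) hp0
  set l := Real.exp (-t) with hl
  have hl0 : 0 < l := Real.exp_pos _
  have hl1 : l < 1 := Real.exp_lt_one_iff.mpr (by linarith)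
  have hg := hW_conv f hf fbar hfbar l hl0.le hl1.le
  have hmaxg := hmax _ hg
  set m : X → ℝ := fun x => l * p x + (1 - l) * q x with hm
  have hmarg : ∀ x : X, (∑ u, (l * f x u + (1 - l) * fbar x u)) = m x := by
    intro x
    rw [Finset.sum_add_distrib, ← Finset.mul_sum, ← Finset.mul_sum]
  have hmaxg' : ∑ x, Real.negMulLog (m x) ≤ ∑ x, Real.negMulLog (q x) := by
    have := hmaxg
    simp only [hmarg] at this
    simp only [Real.negMulLog, neg_mul]
    rw [Finset.sum_neg_distrib, Finset.sum_neg_distrib]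
    exact this
  -- concavity bound for each x
  have hconc : ∀ x : X, l * Real.negMulLog (p x) + (1 - l) * Real.negMulLog (q x)
      ≤ Real.negMulLog (m x) := by
    intro x
    have := Real.concaveOn_negMulLog.2 (Set.mem_Ici.mpr (hpnn x)) (Set.mem_Ici.mpr (hqnn x))
      hl0.le (by linarith : (0:ℝ) ≤ 1 - l) (by ring)
    simpa [smul_eq_mul] using this
  -- split sums at x0
  have hsplit : ∀ g : X → ℝ, ∑ x, g x = g x0 + ∑ x ∈ Finset.univ.erase x0, g x := by
    intro g
    rw [← Finset.add_sum_erase _ g (Finset.mem_univ x0)]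
  have hsum_erase : ∑ x ∈ Finset.univ.erase x0, (Real.negMulLog (q x) - Real.negMulLog (m x))
      ≤ -(l * S) := by
    rw [Finset.mul_sum, ← Finset.sum_neg_distrib]
    apply Finset.sum_le_sum
    intro x _
    have := hconc x
    have h2 : Real.negMulLog (q x) - Real.negMulLog (m x)
        ≤ l * (Real.negMulLog (q x) - Real.negMulLog (p x)) := by nlinarith
    linarith [h2]
  have hmx0 : m x0 = l * p x0 := by simp [hm, hq0']
  have hlogl : Real.log l = -t := Real.log_exp _
  have hnm : Real.negMulLog (m x0) = l * (p x0 * t - p x0 * Real.log (p x0)) := by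
    rw [hmx0, Real.negMulLog]
    rw [Real.log_mul (ne_of_gt hl0) (ne_of_gt hp0), hlogl]
    ring
  have hpt : p x0 * t = 1 + |S| + p x0 * |Real.log (p x0)| := by
    rw [ht]; field_simp
  -- derive contradiction
  have key : ∑ x, Real.negMulLog (q x) < ∑ x, Real.negMulLog (m x) := by
    rw [hsplit (fun x => Real.negMulLog (q x)), hsplit (fun x => Real.negMulLog (m x))]
    have h1 : Real.negMulLog (q x0) = 0 := by rw [hq0']; simp
    have h2 : l * S ≤ l * |S| := by
      apply mul_le_mul_of_nonneg_left (le_abs_self S) hl0.le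
    have h3 : p x0 * Real.log (p x0) ≤ p x0 * |Real.log (p x0)| :=
      mul_le_mul_of_nonneg_left (le_abs_self _) hp0.le
    have h4 : Real.negMulLog (m x0) = l * (1 + |S| + p x0 * |Real.log (p x0)|
        - p x0 * Real.log (p x0)) := by rw [hnm, hpt]
    have h5 : l - l * S ≤ Real.negMulLog (m x0) := by
      rw [h4]
      have hns : -S ≤ |S| := neg_abs_le S |>.trans (le_abs_self S) |>.trans (le_refl _) |> fun _ => neg_le_abs S
      nlinarith [neg_le_abs S, hl0.le]
    have h6' : (∑ x ∈ Finset.univ.erase x0, Real.negMulLog (q x))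
        - (∑ x ∈ Finset.univ.erase x0, Real.negMulLog (m x)) ≤ -(l * S) := by
      rw [← Finset.sum_sub_distrib]; exact hsum_erase
    linarith [hl0]
  exact absurd hmaxg' (not_le.mpr key)
end

section
/- Let X and U be finite nonempty sets and W a convex subset of the set of joint pmfs on X × U. Suppose f* ∈ W maximizes the joint entropy H(f) = -Σ_{x,u} f(x,u) ln f(x,u) over W, and f̄ ∈ W maximizes the marginal entropy H(f_X) = -Σ_x f_X(x) ln f_X(x) over W, where f_X(x) = Σ_u f(x,u). Then the supports of the two state marginals coincide: { x : f̄_X(x) > 0 } = { x : f*_X(x) > 0 }. -/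
open Real Finset

/-- Pointwise concavity bound for `negMulLog`. -/
lemma negMulLog_mix_ge {x y l : ℝ} (hx : 0 ≤ x) (hy : 0 ≤ y) (hl0 : 0 ≤ l) (hl1 : l ≤ 1) :
    l * Real.negMulLog x + (1 - l) * Real.negMulLog y ≤
      Real.negMulLog (l * x + (1 - l) * y) := by
  have h := Real.concaveOn_negMulLog.2 (Set.mem_Ici.2 hx) (Set.mem_Ici.2 hy)
    hl0 (show (0:ℝ) ≤ 1 - l by linarith) (show l + (1 - l) = 1 by ring)
  simpa [smul_eq_mul] using h

/-- Key lemma: if `b` maximizes `∑ negMulLog` among mixtures with `a`, then the support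
of `a` is contained in that of `b`. -/
lemma support_subset_of_max {ι : Type*} [Fintype ι] (a b : ι → ℝ)
    (ha : ∀ i, 0 ≤ a i) (hb : ∀ i, 0 ≤ b i)
    (hmax : ∀ l : ℝ, 0 < l → l ≤ 1 →
      ∑ i, Real.negMulLog (l * a i + (1 - l) * b i) ≤ ∑ i, Real.negMulLog (b i))
    (p : ι) (hap : 0 < a p) : 0 < b p := by
  classical
  by_contra hbp'
  have hbp : b p = 0 := le_antisymm (not_lt.1 hbp') (hb p)
  set A : ℝ := ∑ i, Real.negMulLog (a i) with hA
  set B : ℝ := ∑ i, Real.negMulLog (b i) with hB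
  set c : ℝ := a p with hc
  set t : ℝ := max 1 ((B - A) / c + 1) with ht
  have ht1 : 1 ≤ t := le_max_left _ _
  have ht2 : (B - A) / c + 1 ≤ t := le_max_right _ _
  set l : ℝ := Real.exp (-t) with hl
  have hl0 : 0 < l := Real.exp_pos _
  have hl1 : l ≤ 1 := by
    rw [hl]
    calc Real.exp (-t) ≤ Real.exp 0 := Real.exp_le_exp.2 (by linarith)
    _ = 1 := Real.exp_zero
  have hlogl : Real.log l = -t := Real.log_exp _
  -- lower bound the mixed entropy
  have hpt : Real.negMulLog (l * a p + (1 - l) * b p) =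
      l * Real.negMulLog (a p) + c * (l * t) := by
    rw [hbp, mul_zero, add_zero, Real.negMulLog_mul]
    have hll : Real.negMulLog l = l * t := by
      simp only [Real.negMulLog, hlogl]; ring
    rw [hll, hc]; ring
  have hsum : B + l * (t * c + A - B) ≤
      ∑ i, Real.negMulLog (l * a i + (1 - l) * b i) := by
    set S := Finset.univ.erase p with hS
    have hmem : p ∈ (Finset.univ : Finset ι) := Finset.mem_univ p
    have h2 : ∑ i ∈ S, (l * Real.negMulLog (a i) + (1 - l) * Real.negMulLog (b i)) ≤
        ∑ i ∈ S, Real.negMulLog (l * a i + (1 - l) * b i) :=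
      Finset.sum_le_sum fun i _ => negMulLog_mix_ge (ha i) (hb i) hl0.le hl1
    have hdist : ∑ i ∈ S, (l * Real.negMulLog (a i) + (1 - l) * Real.negMulLog (b i)) =
        l * (∑ i ∈ S, Real.negMulLog (a i)) + (1 - l) * (∑ i ∈ S, Real.negMulLog (b i)) := by
      rw [Finset.sum_add_distrib, Finset.mul_sum, Finset.mul_sum]
    have hsplit : ∑ i, Real.negMulLog (l * a i + (1 - l) * b i) =
        (∑ i ∈ S, Real.negMulLog (l * a i + (1 - l) * b i)) +
          Real.negMulLog (l * a p + (1 - l) * b p) := (Finset.sum_erase_add _ _ hmem).symm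
    have hAsplit : A = (∑ i ∈ S, Real.negMulLog (a i)) + Real.negMulLog (a p) := by
      rw [hA, ← Finset.sum_erase_add _ _ hmem]
    have hBsplit : B = ∑ i ∈ S, Real.negMulLog (b i) := by
      rw [hB, ← Finset.sum_erase_add _ _ hmem, hbp, Real.negMulLog_zero, add_zero]
    rw [hsplit, hpt]
    rw [hdist] at h2
    nlinarith [h2, hAsplit, hBsplit]
  have hpos : 0 < t * c + A - B := by
    have hc0 : 0 < c := hap
    have : (B - A) ≤ t * c - c := by
      have := (div_le_iff₀ hc0).1 (by linarith : (B - A) / c ≤ t - 1)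
      linarith [this]
    linarith
  have := hmax l hl0 hl1
  nlinarith [mul_pos hl0 hpos]

/-- Let `W` be a convex subset of the joint pmfs on `X × U`. If `fstar ∈ W`
maximizes the joint entropy over `W` and `fbar ∈ W` maximizes the marginal entropy over
`W`, then the supports of the two state marginals coincide. -/
theorem marginal_supports_coincide {X U : Type*}
    [Fintype X] [Fintype U] [Nonempty X] [Nonempty U]
    (W : Set (X → U → ℝ))
    (hW_pmf : ∀ f ∈ W, (∀ x u, 0 ≤ f x u) ∧ ∑ x, ∑ u, f x u = 1)
    (hW_conv : ∀ f ∈ W, ∀ g ∈ W, ∀ l : ℝ, 0 ≤ l → l ≤ 1 →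
      (fun x u => l * f x u + (1 - l) * g x u) ∈ W)
    (fstar : X → U → ℝ) (hfstar : fstar ∈ W)
    (hmax_joint : ∀ f ∈ W,
      -∑ x, ∑ u, f x u * Real.log (f x u) ≤
        -∑ x, ∑ u, fstar x u * Real.log (fstar x u))
    (fbar : X → U → ℝ) (hfbar : fbar ∈ W)
    (hmax_marg : ∀ f ∈ W,
      -∑ x, (∑ u, f x u) * Real.log (∑ u, f x u) ≤
        -∑ x, (∑ u, fbar x u) * Real.log (∑ u, fbar x u)) :
    {x : X | 0 < ∑ u, fbar x u} = {x : X | 0 < ∑ u, fstar x u} := by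
  have hnml : ∀ g : X → U → ℝ, ∀ x : X,
      Real.negMulLog (∑ u, g x u) = -((∑ u, g x u) * Real.log (∑ u, g x u)) := by
    intro g x; simp only [Real.negMulLog_eq_neg]
  -- support of any f's marginal is inside fbar's marginal support
  have hbar : ∀ f ∈ W, ∀ x : X, 0 < ∑ u, f x u → 0 < ∑ u, fbar x u := by
    intro f hf x hx
    refine support_subset_of_max (fun x => ∑ u, f x u) (fun x => ∑ u, fbar x u)
      (fun x => Finset.sum_nonneg fun u _ => (hW_pmf f hf).1 x u)
      (fun x => Finset.sum_nonneg fun u _ => (hW_pmf fbar hfbar).1 x u)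
      ?_ x hx
    intro l hl0 hl1
    have hmem := hW_conv f hf fbar hfbar l hl0.le hl1
    have := hmax_marg _ hmem
    have hrw : ∀ x : X, (∑ u, (l * f x u + (1 - l) * fbar x u)) =
        l * (∑ u, f x u) + (1 - l) * (∑ u, fbar x u) := by
      intro x; rw [Finset.sum_add_distrib, Finset.mul_sum, Finset.mul_sum]
    calc ∑ x, Real.negMulLog (l * (∑ u, f x u) + (1 - l) * (∑ u, fbar x u))
        = -∑ x, (∑ u, (fun x u => l * f x u + (1 - l) * fbar x u) x u) *
            Real.log (∑ u, (fun x u => l * f x u + (1 - l) * fbar x u) x u) := by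
          rw [← Finset.sum_neg_distrib]
          exact Finset.sum_congr rfl fun x _ => by rw [← hrw x]; simp only [Real.negMulLog_eq_neg]
      _ ≤ -∑ x, (∑ u, fbar x u) * Real.log (∑ u, fbar x u) := this
      _ = ∑ x, Real.negMulLog (∑ u, fbar x u) := by
          rw [← Finset.sum_neg_distrib]
          exact Finset.sum_congr rfl fun x _ => by simp only [Real.negMulLog_eq_neg]
  -- support of any f's joint is inside fstar's joint support (hence marginals too)
  have hstar : ∀ f ∈ W, ∀ x : X, 0 < ∑ u, f x u → 0 < ∑ u, fstar x u := by
    intro f hf x hx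
    have hfnn := (hW_pmf f hf).1
    have hsnn := (hW_pmf fstar hfstar).1
    -- find u with f x u > 0
    obtain ⟨u0, _, hu0⟩ : ∃ u ∈ Finset.univ, 0 < f x u := by
      by_contra h
      push_neg at h
      have : ∑ u, f x u ≤ 0 := Finset.sum_nonpos fun u hu => h u hu
      linarith
    have key : 0 < fstar x u0 := by
      refine support_subset_of_max (fun p : X × U => f p.1 p.2)
        (fun p : X × U => fstar p.1 p.2)
        (fun p => hfnn p.1 p.2) (fun p => hsnn p.1 p.2) ?_ (x, u0) hu0
      intro l hl0 hl1
      have hmem := hW_conv f hf fstar hfstar l hl0.le hl1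
      have := hmax_joint _ hmem
      calc ∑ p : X × U, Real.negMulLog (l * f p.1 p.2 + (1 - l) * fstar p.1 p.2)
          = -∑ x, ∑ u, (fun x u => l * f x u + (1 - l) * fstar x u) x u *
              Real.log ((fun x u => l * f x u + (1 - l) * fstar x u) x u) := by
            rw [Fintype.sum_prod_type]
            rw [← Finset.sum_neg_distrib]
            refine Finset.sum_congr rfl fun x _ => ?_
            rw [← Finset.sum_neg_distrib]
            exact Finset.sum_congr rfl fun u _ => by simp only [Real.negMulLog_eq_neg]
        _ ≤ -∑ x, ∑ u, fstar x u * Real.log (fstar x u) := this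
        _ = ∑ p : X × U, Real.negMulLog (fstar p.1 p.2) := by
            rw [Fintype.sum_prod_type, ← Finset.sum_neg_distrib]
            refine Finset.sum_congr rfl fun x _ => ?_
            rw [← Finset.sum_neg_distrib]
            exact Finset.sum_congr rfl fun u _ => by simp only [Real.negMulLog_eq_neg]
    calc (0 : ℝ) < fstar x u0 := key
      _ ≤ ∑ u, fstar x u := Finset.single_le_sum (fun u _ => hsnn x u) (Finset.mem_univ u0)
  ext x
  simp only [Set.mem_setOf_eq]
  exact ⟨fun h => hstar fbar hfbar x h, fun h => hbar fstar hfstar x h⟩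
end

section
/- Let X and U be finite nonempty sets, Q a transition kernel on X controlled by U, and f a joint pmf on X × U satisfying the stationarity constraint Σ_{u⁺} f(x⁺,u⁺) = Σ_{x,u} Q(x⁺,x,u) f(x,u) for all x⁺ ∈ X. Let f_X(x) = Σ_u f(x,u), let G be any memoryless policy, and define the policy K(u,x) = f(x,u)/f_X(x) if f_X(x) > 0 and K(u,x) = G(u,x) otherwise. Then the state marginal f_X is an invariant pmf of the closed-loop transition matrix: Σ_{x∈X} (Σ_{u∈U} Q(x⁺,x,u) K(u,x)) f_X(x) = f_X(x⁺) for all x⁺ ∈ X. -/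
/-- If a joint pmf `f` satisfies the stationarity constraint, then its state
marginal `f_X` is an invariant pmf of the closed-loop transition matrix induced by the
policy `K(u,x) = f(x,u)/f_X(x)` when `f_X(x) > 0` and `K(u,x) = G(u,x)` otherwise:
`∑ x, (∑ u, Q(x⁺,x,u) K(u,x)) f_X(x) = f_X(x⁺)` for all `x⁺`. -/
theorem marginal_invariant_closed_loop {X U : Type*} [Fintype X] [Fintype U]
    [Nonempty X] [Nonempty U]
    (Q : X → X → U → ℝ)
    (hQ0 : ∀ x' x u, 0 ≤ Q x' x u)
    (hQ1 : ∀ x u, ∑ x', Q x' x u = 1)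
    (f : X → U → ℝ)
    (hf0 : ∀ x u, 0 ≤ f x u)
    (hf1 : ∑ x, ∑ u, f x u = 1)
    (hstat : ∀ x' : X, ∑ u', f x' u' = ∑ x, ∑ u, Q x' x u * f x u)
    (G : U → X → ℝ)
    (hG0 : ∀ u x, 0 ≤ G u x)
    (hG1 : ∀ x, ∑ u, G u x = 1) :
    ∀ x' : X,
      ∑ x, (∑ u, Q x' x u *
          (if 0 < ∑ u'', f x u'' then f x u / ∑ u'', f x u'' else G u x)) *
        (∑ u, f x u) = ∑ u, f x' u := by
  intro x'
  rw [hstat x']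
  refine Finset.sum_congr rfl fun x _ => ?_
  by_cases h : 0 < ∑ u'', f x u''
  · rw [Finset.sum_mul]
    refine Finset.sum_congr rfl fun u _ => ?_
    simp only [if_pos h]
    field_simp
  · have hz : ∀ u, f x u = 0 := by
      intro u
      have hnn : (0:ℝ) ≤ ∑ u'', f x u'' := Finset.sum_nonneg (fun u _ => hf0 x u)
      have heq : ∑ u'', f x u'' = 0 := le_antisymm (not_lt.mp h) hnn
      exact (Finset.sum_eq_zero_iff_of_nonneg (fun u _ => hf0 x u)).mp heq u (Finset.mem_univ u)
    simp [hz]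
end
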